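/- Let φ be an anisotropic quadratic n-fold Pfister form over a field F of characteristic 2 and γ ∈ F× a nonsquare. If φ becomes isotropic over the inseparable quadratic extension K = F(√γ), then the diagonal quadratic form ⟨1, γ⟩ (i.e. x² + γy²) is a subform of the pure part φ' of φ. -/

import Mathlib

/-- The subfield of squares `F²` of a field of characteristic 2. -/
def sqSubfield (F : Type*) [Field F] [CharP F 2] : Subfield F where
  carrier := {x | ∃ y : F, y ^ 2 = x}
  mul_mem' := by rintro a b ⟨y, rfl⟩ ⟨z, rfl⟩; exact ⟨y * z, by ring⟩
  one_mem' := ⟨1, one_pow 2⟩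
  add_mem' := by
    rintro a b ⟨y, rfl⟩ ⟨z, rfl⟩
    exact ⟨y + z, by rw [add_sq]; linear_combination (y*z) * (CharP.cast_eq_zero F 2)⟩
  zero_mem' := ⟨0, by ring⟩
  neg_mem' := by rintro a ⟨y, rfl⟩; exact ⟨y, (CharTwo.neg_eq _).symm⟩
  inv_mem' := by rintro a ⟨y, rfl⟩; exact ⟨y⁻¹, by rw [inv_pow]⟩

/-- The monomial `β₁^{d₁} ⋯ βₙ^{dₙ}`. -/
def mono {R : Type*} [CommRing R] {n : ℕ} (β : Fin n → R) (d : Fin n → Bool) : R :=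
  ∏ i, if d i then β i else 1

/-- The diagonal bilinear `n`-fold Pfister form `⟨⟨β₁,…,βₙ⟩⟩_b`. -/
def bPf (F : Type*) [Field F] {n : ℕ} (β : Fin n → F) (v w : (Fin n → Bool) → F) : F :=
  ∑ d, mono β d * v d * w d

/-- Pure part of the bilinear Pfister form. -/
def bPfPure (F : Type*) [Field F] {n : ℕ} (β : Fin n → F)
    (v w : {d : Fin n → Bool // d ≠ fun _ => false} → F) : F :=
  ∑ d, mono β d.1 * v d * w d

/-- Anisotropy of a bilinear form. -/
def BAniso (F : Type*) [Field F] {V : Type*} [AddCommGroup V] [Module F V]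
    (B : V → V → F) : Prop :=
  ∀ v : V, v ≠ 0 → B v v ≠ 0

/-- Isometry of bilinear forms. -/
def BilinIsom (F : Type*) [Field F] {V W : Type*} [AddCommGroup V] [Module F V]
    [AddCommGroup W] [Module F W] (B₁ : V → V → F) (B₂ : W → W → F) : Prop :=
  ∃ e : V ≃ₗ[F] W, ∀ v w, B₂ (e v) (e w) = B₁ v w

/-- Isometry of quadratic forms (given as value functions). -/
def QuadIsom (F : Type*) [Field F] {V W : Type*} [AddCommGroup V] [Module F V]
    [AddCommGroup W] [Module F W] (q₁ : V → F) (q₂ : W → F) : Prop :=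
  ∃ e : V ≃ₗ[F] W, ∀ v, q₂ (e v) = q₁ v

/-- The quadratic Pfister form `⟨⟨β₁,…,β_m, a]]` as a value function. -/
def qPf (R : Type*) [CommRing R] {m : ℕ} (β : Fin m → R) (a : R)
    (x : (Fin m → Bool) → R × R) : R :=
  ∑ e, mono β e * ((x e).1 ^ 2 + (x e).1 * (x e).2 + a * (x e).2 ^ 2)

/-- Minimal index where `d` is `true`. -/
noncomputable def minIdx {n : ℕ} (d : Fin n → Bool) (hd : d ≠ fun _ => false) : Fin n :=
  (Finset.univ.filter fun i => d i = true).min' (by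
    obtain ⟨i, hi⟩ := Function.ne_iff.mp hd
    exact ⟨i, Finset.mem_filter.mpr ⟨Finset.mem_univ i, by simpa using hi⟩⟩)

/-- Remove the `ℓ`-th entry from a tuple. -/
def removeIdx {R : Type*} {n : ℕ} (α : Fin n → R) (ℓ : Fin n) (i : Fin (n - 1)) : R :=
  if h : (i : ℕ) < (ℓ : ℕ) then α ⟨i, by omega⟩ else α ⟨(i : ℕ) + 1, by omega⟩

/-- First `n-1` entries of a tuple. -/
def front {R : Type*} {n : ℕ} (α : Fin n → R) (i : Fin (n - 1)) : R :=
  α ⟨i, by omega⟩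

/-- Last entry of a tuple (junk value `0` if the tuple is empty). -/
def qlast {R : Type*} [CommRing R] {n : ℕ} (α : Fin n → R) : R :=
  if h : n = 0 then 0 else α ⟨n - 1, by omega⟩

set_option linter.unusedSectionVars false

section Basic
variable {F : Type*} [Field F] {m : ℕ} (β : Fin m → F) (a : F)

/-- polar form of `qPf`. -/
def bq (β : Fin m → F) (x y : (Fin m → Bool) → F × F) : F :=
  ∑ d, mono β d * ((x d).1 * (y d).2 + (x d).2 * (y d).1)

variable [CharP F 2]

lemma h2F : (2 : F) = 0 := by exact_mod_cast CharP.cast_eq_zero F 2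

lemma qPf_zero : qPf F β a 0 = 0 := by
  simp [qPf]

lemma qPf_add (x y : (Fin m → Bool) → F × F) :
    qPf F β a (x + y) = qPf F β a x + qPf F β a y + bq β x y := by
  simp only [qPf, bq]
  rw [← Finset.sum_add_distrib, ← Finset.sum_add_distrib]
  refine Finset.sum_congr rfl fun d _ => ?_
  simp only [Pi.add_apply, Prod.fst_add, Prod.snd_add]
  linear_combination (mono β d * ((x d).1 * (y d).1 + a * (x d).2 * (y d).2)) * (h2F (F := F))

lemma qPf_smul (s : F) (x : (Fin m → Bool) → F × F) :
    qPf F β a (s • x) = s ^ 2 * qPf F β a x := by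
  simp only [qPf, Finset.mul_sum]
  refine Finset.sum_congr rfl fun d _ => ?_
  simp only [Pi.smul_apply, Prod.smul_fst, Prod.smul_snd, smul_eq_mul]
  ring

lemma bq_comm (x y : (Fin m → Bool) → F × F) : bq β x y = bq β y x := by
  refine Finset.sum_congr rfl fun d _ => by ring

lemma bq_add_right (x y z : (Fin m → Bool) → F × F) :
    bq β x (y + z) = bq β x y + bq β x z := by
  simp only [bq]
  rw [← Finset.sum_add_distrib]
  refine Finset.sum_congr rfl fun d _ => ?_
  simp only [Pi.add_apply, Prod.fst_add, Prod.snd_add]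
  ring

lemma bq_smul_right (s : F) (x y : (Fin m → Bool) → F × F) :
    bq β x (s • y) = s * bq β x y := by
  simp only [bq, Finset.mul_sum]
  refine Finset.sum_congr rfl fun d _ => ?_
  simp only [Pi.smul_apply, Prod.smul_fst, Prod.smul_snd, smul_eq_mul]
  ring

lemma Nmul (p q r s : F) :
    (p * r + a * q * s) ^ 2 + (p * r + a * q * s) * (p * s + q * r + q * s)
      + a * (p * s + q * r + q * s) ^ 2
    = (p ^ 2 + p * q + a * q ^ 2) * (r ^ 2 + r * s + a * s ^ 2) := by
  linear_combination (a*q^2*s^2 + a*q^2*r*s + a*p*q*s^2 + 2*a*p*q*r*s) * (h2F (F := F))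

end Basic

section Split
variable {F : Type*} [Field F] {m : ℕ}

/-- restriction at last-entry `b` -/
def res (b : Bool) (x : (Fin (m+1) → Bool) → F × F) (d : Fin m → Bool) : F × F :=
  x (Fin.cons b d)

/-- combine two `m`-vectors into an `(m+1)`-vector -/
def cmb (p q : (Fin m → Bool) → F × F) (d : Fin (m+1) → Bool) : F × F :=
  if d 0 then q (Fin.tail d) else p (Fin.tail d)

@[simp] lemma res_cmb_false (p q : (Fin m → Bool) → F × F) : res false (cmb p q) = p := by
  funext d; simp [res, cmb, Fin.tail_cons]

@[simp] lemma res_cmb_true (p q : (Fin m → Bool) → F × F) : res true (cmb p q) = q := by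
  funext d; simp [res, cmb, Fin.tail_cons]

lemma res_add (b : Bool) (x y : (Fin (m+1) → Bool) → F × F) :
    res b (x + y) = res b x + res b y := rfl

lemma cmb_add (p q p' q' : (Fin m → Bool) → F × F) :
    cmb (p + p') (q + q') = cmb p q + cmb p' q' := by
  funext d; by_cases h : d 0 <;> simp [cmb, h]

lemma mono_cons_false (β : Fin (m+1) → F) (d : Fin m → Bool) :
    mono β (Fin.cons false d) = mono (Fin.tail β) d := by
  simp [mono, Fin.prod_univ_succ, Fin.cons_zero, Fin.cons_succ, Fin.tail]

lemma mono_cons_true (β : Fin (m+1) → F) (d : Fin m → Bool) :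
    mono β (Fin.cons true d) = β 0 * mono (Fin.tail β) d := by
  simp [mono, Fin.prod_univ_succ, Fin.cons_zero, Fin.cons_succ, Fin.tail]

lemma qPf_split (β : Fin (m+1) → F) (a : F) (x : (Fin (m+1) → Bool) → F × F) :
    qPf F β a x = qPf F (Fin.tail β) a (res false x)
      + β 0 * qPf F (Fin.tail β) a (res true x) := by
  rw [qPf, ← Equiv.sum_comp (Fin.consEquiv (fun _ : Fin (m+1) => Bool)).symm.symm,
    Fintype.sum_prod_type, Fintype.sum_bool]
  simp only [Fin.consEquiv, Equiv.symm_symm, Equiv.coe_fn_mk, mono_cons_false, mono_cons_true,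
    qPf, res, Finset.mul_sum]
  rw [add_comm]
  congr 1 <;> refine Finset.sum_congr rfl fun d _ => by ring

lemma qPf_cmb (β : Fin (m+1) → F) (a : F) (p q : (Fin m → Bool) → F × F) :
    qPf F β a (cmb p q) = qPf F (Fin.tail β) a p + β 0 * qPf F (Fin.tail β) a q := by
  rw [qPf_split]; simp

end Split

section Round
variable {F : Type*} [Field F] [CharP F 2]

lemma roundQ : ∀ (m : ℕ) (β : Fin m → F) (a : F),
    (∀ x : (Fin m → Bool) → F × F, x ≠ 0 → qPf F β a x ≠ 0) →
    ∀ c : F, c ≠ 0 → (∃ x, qPf F β a x = c) →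
    ∃ e : ((Fin m → Bool) → F × F) → ((Fin m → Bool) → F × F),
      (∀ x y, e (x + y) = e x + e y) ∧ ∀ x, qPf F β a (e x) = c * qPf F β a x := by
  intro m
  induction m with
  | zero =>
    intro β a _ c _ hex
    obtain ⟨x₀, hx₀⟩ := hex
    set df : Fin 0 → Bool := fun _ => false with hdf
    have huniv : ∀ g : Fin 0 → Bool, g = df := fun g => funext fun i => i.elim0
    have hval : ∀ x : (Fin 0 → Bool) → F × F,
        qPf F β a x = (x df).1 ^ 2 + (x df).1 * (x df).2 + a * (x df).2 ^ 2 := by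
      intro x
      have hU : (Finset.univ : Finset (Fin 0 → Bool)) = {df} :=
        Finset.eq_singleton_iff_unique_mem.mpr ⟨Finset.mem_univ df, fun y _ => huniv y⟩
      have h2 : mono β df = 1 := by
        rw [mono]; exact Finset.prod_of_isEmpty _
      rw [qPf, hU, Finset.sum_singleton, h2, one_mul]
    set P := (x₀ df).1; set Qq := (x₀ df).2
    have hc' : P ^ 2 + P * Qq + a * Qq ^ 2 = c := by rw [← hx₀, hval]
    refine ⟨fun x _ => (P * (x df).1 + a * Qq * (x df).2,
      P * (x df).2 + Qq * (x df).1 + Qq * (x df).2), ?_, ?_⟩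
    · intro x y
      funext d
      simp only [Pi.add_apply, Prod.fst_add, Prod.snd_add, Prod.mk_add_mk]
      exact Prod.ext (by ring) (by ring)
    · intro x
      rw [hval, hval x]
      simp only
      rw [← hc', ← Nmul a P Qq (x df).1 (x df).2]
  | succ m ih =>
    rintro β a haniso c hc ⟨X, hX⟩
    set b := β 0 with hb
    set β' := Fin.tail β with hβ'
    have hQ0 : qPf F β' a 0 = 0 := qPf_zero β' a
    have hanisom : ∀ x : (Fin m → Bool) → F × F, x ≠ 0 → qPf F β' a x ≠ 0 := by
      intro x hx h0
      have hX0 : cmb x (0 : (Fin m → Bool) → F × F) ≠ 0 := by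
        intro h
        apply hx; funext d
        have := congrFun h (Fin.cons false d)
        simpa [cmb, Fin.cons_zero, Fin.tail_cons] using this
      exact haniso (cmb x 0) hX0 (by rw [qPf_cmb, ← hb, ← hβ', h0, hQ0]; ring)
    set p := res false X with hp'
    set q := res true X with hq'
    have hsplit : qPf F β' a p + b * qPf F β' a q = c := by
      rw [← qPf_split]; exact hX
    by_cases hq : q = 0
    · have hcp : qPf F β' a p = c := by
        rw [hq, hQ0, mul_zero, add_zero] at hsplit; exact hsplit
      obtain ⟨e, he_add, he⟩ := ih β' a hanisom c hc ⟨p, hcp⟩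
      refine ⟨fun x => cmb (e (res false x)) (e (res true x)), ?_, ?_⟩
      · intro x y; dsimp only; rw [res_add, res_add, he_add, he_add, cmb_add]
      · intro x
        dsimp only
        rw [qPf_cmb, ← hb, ← hβ', he, he, qPf_split β a x, ← hb, ← hβ']
        ring
    · have hd : qPf F β' a q ≠ 0 := hanisom q hq
      obtain ⟨Ed, Ed_add, hEd⟩ := ih β' a hanisom _ hd ⟨q, rfl⟩
      by_cases hp : p = 0
      · have hcbd : c = b * qPf F β' a q := by
          rw [hp, qPf_zero, zero_add] at hsplit; exact hsplit.symm
        refine ⟨fun x => cmb (b • Ed (res true x)) (Ed (res false x)), ?_, ?_⟩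
        · intro x y; dsimp only; rw [res_add, res_add, Ed_add, Ed_add, smul_add, cmb_add]
        · intro x
          dsimp only
          rw [qPf_cmb, ← hb, ← hβ', qPf_smul, hEd, hEd, qPf_split β a x, ← hb, ← hβ', hcbd]
          ring
      · have he0 : qPf F β' a p ≠ 0 := hanisom p hp
        obtain ⟨Ee, Ee_add, hEe⟩ := ih β' a hanisom _ he0 ⟨p, rfl⟩
        set dv := qPf F β' a q with hdv
        set ev := qPf F β' a p with hev
        have hinvne : (ev * dv)⁻¹ ≠ 0 := inv_ne_zero (mul_ne_zero he0 hd)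
        have hwit : qPf F β' a ((ev * dv)⁻¹ • Ed p) = (ev * dv)⁻¹ := by
          rw [qPf_smul, hEd, ← hev]
          field_simp
        obtain ⟨Ei, Ei_add, hEi⟩ := ih β' a hanisom _ hinvne ⟨_, hwit⟩
        refine ⟨fun x => cmb (Ee (res false x + (b * dv) • Ei (res true x)))
            (Ed (res false x + ev • Ei (res true x))), ?_, ?_⟩
        · intro x y
          dsimp only
          simp only [res_add, Ei_add, smul_add]
          rw [add_add_add_comm (res false x) (res false y), Ee_add,
            add_add_add_comm (res false x) (res false y), Ed_add, cmb_add]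
        · intro x
          dsimp only
          have hI : ev * dv * (ev * dv)⁻¹ = 1 := mul_inv_cancel₀ (mul_ne_zero he0 hd)
          rw [qPf_cmb, ← hb, ← hβ', hEe, hEd, qPf_add, qPf_add, qPf_smul, qPf_smul,
            bq_smul_right, bq_smul_right, hEi, qPf_split β a x, ← hb, ← hβ']
          set B := bq β' (res false x) (Ei (res true x))
          set Q0 := qPf F β' a (res false x)
          set Q1 := qPf F β' a (res true x)
          linear_combination (Q0 + b * Q1 + b * Q1 * (ev * ev⁻¹ * (dv * dv⁻¹) - 1)) * hsplit +
            (b * c * Q1) * hI + (ev * b * dv * B) * (h2F (F := F))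

end Round

section KExt
variable {F : Type*} [Field F] [CharP F 2] (γ : F)

local notation "fγ" => (Polynomial.X ^ 2 - Polynomial.C γ : Polynomial F)
local notation "K" => AdjoinRoot (Polynomial.X ^ 2 - Polynomial.C γ : Polynomial F)

lemma fmonic : (fγ).Monic := Polynomial.monic_X_pow_sub_C γ (two_ne_zero)

lemma fdeg : (fγ).degree = 2 := Polynomial.degree_X_pow_sub_C (by norm_num) γ

lemma Kinj : ∀ A : F, algebraMap F K A = 0 → A = 0 := by
  intro A hA
  by_contra hA0
  have h1 : (1 : K) = 0 := by
    have := congrArg (fun u => algebraMap F K A⁻¹ * u) hA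
    simpa [← map_mul, inv_mul_cancel₀ hA0] using this
  have h1' : AdjoinRoot.mk fγ 1 = AdjoinRoot.mk fγ 0 := by simpa using h1
  have hdvd : fγ ∣ 1 - 0 := (AdjoinRoot.mk_eq_mk).mp h1'
  have : (fγ).degree ≤ (1 - 0 : Polynomial F).degree :=
    Polynomial.degree_le_of_dvd hdvd (by norm_num)
  rw [fdeg] at this
  norm_num at this

lemma root_sq : (AdjoinRoot.root fγ) ^ 2 = algebraMap F K γ := by
  have h := AdjoinRoot.mk_self (f := fγ)
  rw [map_sub, map_pow, AdjoinRoot.mk_X, sub_eq_zero] at h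
  rw [h, AdjoinRoot.mk_C, AdjoinRoot.algebraMap_eq]

lemma Krepr : ∀ u : K, ∃ A B : F,
    u = algebraMap F K A + algebraMap F K B * AdjoinRoot.root fγ := by
  intro u
  obtain ⟨P, rfl⟩ := AdjoinRoot.mk_surjective u
  set r := P %ₘ fγ with hr
  have hmk : AdjoinRoot.mk fγ P = AdjoinRoot.mk fγ r := by
    conv_lhs => rw [← Polynomial.modByMonic_add_div P fγ]
    rw [map_add, map_mul, AdjoinRoot.mk_self, zero_mul, add_zero]
  have hdlt : r.degree < 2 := by
    rw [hr, ← fdeg (γ := γ)]; exact Polynomial.degree_modByMonic_lt P (fmonic γ)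
  have hdle : r.degree ≤ 1 := by
    rcases hd : r.degree with _ | k
    · exact bot_le
    · rw [hd] at hdlt
      rw [show (some k : WithBot ℕ) = (k : WithBot ℕ) from rfl] at hdlt ⊢
      have hk : (k : ℕ) < 2 := by exact_mod_cast hdlt
      exact_mod_cast Nat.le_of_lt_succ hk
  set c0 := r.coeff 0 with hc0
  set c1 := r.coeff 1 with hc1
  refine ⟨c0, c1, ?_⟩
  rw [hmk, Polynomial.eq_X_add_C_of_degree_le_one hdle, ← hc0, ← hc1]
  rw [map_add, map_mul, AdjoinRoot.mk_X, AdjoinRoot.mk_C, AdjoinRoot.mk_C,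
    AdjoinRoot.algebraMap_eq]
  ring

lemma Kuniq (hγ : ¬ ∃ s : F, s ^ 2 = γ) : ∀ A B : F,
    algebraMap F K A + algebraMap F K B * AdjoinRoot.root fγ = 0 → A = 0 ∧ B = 0 := by
  intro A B h
  by_cases hB : B = 0
  · refine ⟨Kinj γ A ?_, hB⟩
    simpa [hB] using h
  · exfalso
    have habr : algebraMap F K B * AdjoinRoot.root fγ = algebraMap F K A := by
      have hneg : -algebraMap F K A = algebraMap F K A := by
        rw [← map_neg, CharTwo.neg_eq]
      linear_combination h + hneg
    have hroot : AdjoinRoot.root fγ = algebraMap F K (B⁻¹ * A) := by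
      have h1 : algebraMap F K B⁻¹ * (algebraMap F K B * AdjoinRoot.root fγ)
          = algebraMap F K B⁻¹ * algebraMap F K A := by rw [habr]
      rw [← mul_assoc, ← map_mul, inv_mul_cancel₀ hB, map_one, one_mul] at h1
      rw [h1, ← map_mul]
    apply hγ
    refine ⟨B⁻¹ * A, ?_⟩
    have hsq : algebraMap F K ((B⁻¹ * A) ^ 2) = algebraMap F K γ := by
      rw [map_pow, ← hroot, root_sq]
    have h0 := Kinj γ ((B⁻¹ * A) ^ 2 - γ) (by rw [map_sub, hsq, sub_self])
    exact sub_eq_zero.mp h0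
end KExt

section Ext2
variable {F : Type*} [Field F] [CharP F 2] (γ : F)

local notation "fγ" => (Polynomial.X ^ 2 - Polynomial.C γ : Polynomial F)
local notation "K" => AdjoinRoot (Polynomial.X ^ 2 - Polynomial.C γ : Polynomial F)

lemma h2K : (2 : K) = 0 := by
  rw [show (2 : K) = algebraMap F K 2 from (map_ofNat _ 2).symm,
    show (2 : F) = 0 from h2F, map_zero]

lemma mono_map {m : ℕ} (β : Fin m → F) (d : Fin m → Bool) :
    mono (fun i => algebraMap F K (β i)) d = algebraMap F K (mono β d) := by
  rw [mono, mono, map_prod]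
  refine Finset.prod_congr rfl fun i _ => ?_
  by_cases h : d i <;> simp [h]

lemma qPf_ext {m : ℕ} (β : Fin m → F) (a : F) (y z : (Fin m → Bool) → F × F) :
    qPf K (fun i => algebraMap F K (β i)) (algebraMap F K a)
      (fun d => (algebraMap F K (y d).1 + algebraMap F K (z d).1 * AdjoinRoot.root fγ,
        algebraMap F K (y d).2 + algebraMap F K (z d).2 * AdjoinRoot.root fγ))
    = algebraMap F K (qPf F β a y + γ * qPf F β a z)
      + algebraMap F K (bq β y z) * AdjoinRoot.root fγ := by
  have hR : (AdjoinRoot.root fγ) ^ 2 = algebraMap F K γ := root_sq γ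
  have h2 : (2 : K) = 0 := h2K γ
  simp only [qPf, bq, map_add, map_mul, map_sum, map_pow, mono_map, Finset.mul_sum,
    Finset.sum_mul, ← Finset.sum_add_distrib]
  refine Finset.sum_congr rfl fun d _ => ?_
  set M := algebraMap F K (mono β d)
  set p0 := algebraMap F K ((y d).1); set q0 := algebraMap F K ((y d).2)
  set p1 := algebraMap F K ((z d).1); set q1 := algebraMap F K ((z d).2)
  set a' := algebraMap F K a
  set R := AdjoinRoot.root fγ
  linear_combination (M * (p1 ^ 2 + p1 * q1 + a' * q1 ^ 2)) * hR +
    (M * (p0 * p1 + a' * q0 * q1) * R) * h2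

end Ext2

section U1
variable {F : Type*} [Field F] [CharP F 2] {m : ℕ} (β : Fin m → F) (a : F)

/-- canonical vector of value 1 -/
def u1 : (Fin m → Bool) → F × F := fun d => if d = (fun _ => false) then ((1 : F), 0) else 0

lemma qPf_u1 : qPf F β a (u1 : (Fin m → Bool) → F × F) = 1 := by
  rw [qPf]
  rw [Finset.sum_eq_single (fun _ => false : Fin m → Bool)]
  · simp [u1, mono]
  · intro d _ hd
    simp [u1, hd]
  · intro h
    exact absurd (Finset.mem_univ _) h

lemma bq_u1 (w : (Fin m → Bool) → F × F) :
    bq β (u1 : (Fin m → Bool) → F × F) w = (w (fun _ => false)).2 := by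
  rw [bq]
  rw [Finset.sum_eq_single (fun _ => false : Fin m → Bool)]
  · simp [u1, mono]
  · intro d _ hd
    simp [u1, hd]
  · intro h
    exact absurd (Finset.mem_univ _) h

end U1

section Final
variable {F : Type*} [Field F] [CharP F 2]

lemma bq_smul_left {m : ℕ} (β : Fin m → F) (s : F) (x y : (Fin m → Bool) → F × F) :
    bq β (s • x) y = s * bq β x y := by
  rw [bq_comm, bq_smul_right, bq_comm]

lemma pair_calc {m : ℕ} (β : Fin m → F) (a γ : F) (u w : (Fin m → Bool) → F × F)
    (h1 : qPf F β a u = 1) (h2 : qPf F β a w = γ) (hb : bq β u w = 0) :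
    ∀ s t : F, qPf F β a (s • u + t • w) = s ^ 2 + γ * t ^ 2 := by
  intro s t
  rw [qPf_add, qPf_smul, qPf_smul, bq_smul_left, bq_smul_right, h1, h2, hb]
  ring

lemma VV_self_add {m : ℕ} (v : (Fin m → Bool) → F × F) : v + v = 0 := by
  funext d
  refine Prod.ext ?_ ?_ <;>
    · simp only [Pi.add_apply, Prod.fst_add, Prod.snd_add, Pi.zero_apply]
      first
        | (show (v d).1 + (v d).1 = (0 : F × F).1;
           simp only [Prod.fst_zero]; linear_combination (v d).1 * (h2F (F := F)))
        | (show (v d).2 + (v d).2 = (0 : F × F).2;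
           simp only [Prod.snd_zero]; linear_combination (v d).2 * (h2F (F := F)))

theorem stmt_14' (F : Type*) [Field F] [CharP F 2] (n : ℕ) (hn : 1 ≤ n)
    (β : Fin (n - 1) → F) (hβ : ∀ i, β i ≠ 0) (a : F)
    (haniso : ∀ x : (Fin (n - 1) → Bool) → F × F, x ≠ 0 → qPf F β a x ≠ 0)
    (γ : F) (hγ : ¬ ∃ s : F, s ^ 2 = γ)
    (hiso : ∃ x : (Fin (n - 1) → Bool) →
        AdjoinRoot (Polynomial.X ^ 2 - Polynomial.C γ) ×
          AdjoinRoot (Polynomial.X ^ 2 - Polynomial.C γ),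
      x ≠ 0 ∧
        qPf (AdjoinRoot (Polynomial.X ^ 2 - Polynomial.C γ))
          (fun i => algebraMap F _ (β i)) (algebraMap F _ a) x = 0) :
    ∃ u w : (Fin (n - 1) → Bool) → F × F,
      (u fun _ => false).2 = 0 ∧ (w fun _ => false).2 = 0 ∧
        ∀ s t : F, qPf F β a (s • u + t • w) = s ^ 2 + γ * t ^ 2 := by
  classical
  obtain ⟨x, hx0, hxq⟩ := hiso
  choose c0 c1 hc using Krepr γ
  set y : (Fin (n-1) → Bool) → F × F := fun d => (c0 (x d).1, c0 (x d).2) with hy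
  set z : (Fin (n-1) → Bool) → F × F := fun d => (c1 (x d).1, c1 (x d).2) with hz
  have hxyz : x = fun d =>
      (algebraMap F _ (y d).1 + algebraMap F _ (z d).1
          * AdjoinRoot.root (Polynomial.X ^ 2 - Polynomial.C γ),
        algebraMap F _ (y d).2 + algebraMap F _ (z d).2
          * AdjoinRoot.root (Polynomial.X ^ 2 - Polynomial.C γ)) := by
    funext d
    exact Prod.ext (hc (x d).1) (hc (x d).2)
  rw [hxyz, qPf_ext γ β a y z] at hxq
  obtain ⟨hA, hB⟩ := Kuniq γ hγ _ _ hxq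
  have hyz : qPf F β a y = γ * qPf F β a z := by
    linear_combination hA - γ * qPf F β a z * (h2F (F := F))
  have hzne : z ≠ 0 := by
    intro h0
    have hy0 : qPf F β a y = 0 := by rw [h0, qPf_zero, mul_zero] at hyz; exact hyz
    have hyz0 : y = 0 := by
      by_contra hy
      exact haniso y hy hy0
    apply hx0
    rw [hxyz, hyz0, h0]
    funext d
    simp
  have hQz : qPf F β a z ≠ 0 := haniso z hzne
  have hwit : qPf F β a ((qPf F β a z)⁻¹ • z) = (qPf F β a z)⁻¹ := by
    rw [qPf_smul]
    field_simp
  obtain ⟨e, he_add, he⟩ := roundQ (n-1) β a haniso (qPf F β a z)⁻¹ (inv_ne_zero hQz)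
    ⟨_, hwit⟩
  have hQy0 : qPf F β a (e y) = γ := by
    rw [he, hyz]
    field_simp
  have hQz0 : qPf F β a (e z) = 1 := by
    rw [he]
    exact inv_mul_cancel₀ hQz
  have hb0 : bq β (e y) (e z) = 0 := by
    have h1 : qPf F β a (e (y + z)) = (qPf F β a z)⁻¹ * qPf F β a (y + z) := he _
    rw [he_add, qPf_add, qPf_add, he, he] at h1
    linear_combination h1 + (qPf F β a z)⁻¹ * hB
  by_cases hz1 : e z = u1
  · refine ⟨u1, e y, by simp [u1], ?_, ?_⟩
    · rw [← bq_u1 β (e y), ← hz1, bq_comm, hb0]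
    · refine pair_calc β a γ _ _ (qPf_u1 β a) hQy0 ?_
      rw [← hz1, bq_comm, hb0]
  · set v : (Fin (n-1) → Bool) → F × F := e z + u1 with hv
    have hvne : v ≠ 0 := by
      intro h0
      apply hz1
      have : e z + (u1 + u1) = 0 + u1 := by rw [← add_assoc, ← hv, h0]
      rwa [VV_self_add, add_zero, zero_add] at this
    have hμ : qPf F β a v ≠ 0 := haniso v hvne
    set μ := qPf F β a v with hμdef
    set B := bq β (e y) v with hBdef
    set w : (Fin (n-1) → Bool) → F × F := e y + (B / μ) • v with hw
    have hQw : qPf F β a w = γ := by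
      rw [hw, qPf_add, qPf_smul, bq_smul_right, hQy0, ← hμdef, ← hBdef]
      field_simp
      linear_combination (B ^ 2) * (h2F (F := F))
    have hbu1w : bq β u1 w = 0 := by
      have hμ2 : μ = bq β (e z) u1 + 2 := by
        rw [hμdef, hv, qPf_add, hQz0, qPf_u1]
        ring
      have hB2 : B = bq β (e y) u1 := by
        rw [hBdef, hv, bq_add_right, hb0, zero_add]
      have hμ2' : μ = bq β (e z) u1 := by
        rw [hμ2]; linear_combination h2F (F := F)
      have hbuu : bq β (u1 : (Fin (n-1) → Bool) → F × F) u1 = 0 := by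
        rw [bq_u1]; simp [u1]
      rw [hw, bq_add_right, bq_smul_right, hv, bq_add_right, hbuu, add_zero,
        bq_comm β u1 (e y), ← hB2, bq_comm β u1 (e z), ← hμ2', div_mul_cancel₀ B hμ]
      linear_combination B * (h2F (F := F))
    have hwdf : (w fun _ => false).2 = 0 := by rw [← bq_u1 β w]; exact hbu1w
    exact ⟨u1, w, by simp [u1], hwdf, pair_calc β a γ _ _ (qPf_u1 β a) hQw hbu1w⟩

end Final


/-- if the anisotropic quadratic `n`-fold Pfister form
`φ = ⟨⟨β₁,…,β_{n-1},a]]` becomes isotropic over the inseparable quadratic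
extension `K = F(√γ) = F[t]/(t²-γ)` (`γ` a nonsquare), then `⟨1,γ⟩` is a subform
of the pure part `φ'`. -/
theorem stmt_14 (F : Type*) [Field F] [CharP F 2] (n : ℕ) (hn : 1 ≤ n)
    (β : Fin (n - 1) → F) (hβ : ∀ i, β i ≠ 0) (a : F)
    (haniso : ∀ x : (Fin (n - 1) → Bool) → F × F, x ≠ 0 → qPf F β a x ≠ 0)
    (γ : F) (hγ : ¬ ∃ s : F, s ^ 2 = γ)
    (hiso : ∃ x : (Fin (n - 1) → Bool) →
        AdjoinRoot (Polynomial.X ^ 2 - Polynomial.C γ) ×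
          AdjoinRoot (Polynomial.X ^ 2 - Polynomial.C γ),
      x ≠ 0 ∧
        qPf (AdjoinRoot (Polynomial.X ^ 2 - Polynomial.C γ))
          (fun i => algebraMap F _ (β i)) (algebraMap F _ a) x = 0) :
    ∃ u w : (Fin (n - 1) → Bool) → F × F,
      (u fun _ => false).2 = 0 ∧ (w fun _ => false).2 = 0 ∧
        ∀ s t : F, qPf F β a (s • u + t • w) = s ^ 2 + γ * t ^ 2 :=
  stmt_14' F n hn β hβ a haniso γ hγ hiso
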